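/- Let C be a model knot complex and let A be an acyclic complex. Then for every t ∈ (0,2) and s ∈ [0,2], γ_{C⊕A}(t) = γ_C(t) and γ²_{C⊕A,t}(s) = γ²_{C,t}(s); consequently Υ_{C⊕A} = Υ_C and Υ²_{C⊕A,t}(s) = Υ²_{C,t}(s). That is, adding acyclic summands to a model knot complex does not change the value of Υ or of Υ². -/

import Mathlib

open scoped BigOperators

/-- A "pre-complex": a finite distinguished basis `B`, a grading `gr`,
bifiltration functions `alg` and `alex`, and a differential recorded by its
matrix `d` over the field `F₂ = ZMod 2`:  `∂ x = ∑ y, d x y • y`. -/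
structure PreComplex where
  B : Type
  fB : Fintype B
  dB : DecidableEq B
  gr : B → ℤ
  alg : B → ℤ
  alex : B → ℤ
  d : B → B → ZMod 2

attribute [instance] PreComplex.fB PreComplex.dB

namespace PreComplex

variable (C : PreComplex)

/-- Chains: F₂-linear combinations of basis elements. -/
abbrev Chain : Type := C.B → ZMod 2

/-- The boundary of a chain, extending `∂ x = ∑ y, d x y • y` linearly. -/
def bdry (c : C.Chain) : C.Chain := fun y => ∑ x, c x * C.d x y

/-- A chain is homogeneous of grading `k`. -/
def isGraded (c : C.Chain) (k : ℤ) : Prop := ∀ x, c x ≠ 0 → C.gr x = k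

def isCycle (c : C.Chain) : Prop := C.bdry c = 0

def isBoundary (c : C.Chain) : Prop := ∃ w : C.Chain, C.bdry w = c

/-- A cycle of grading 0 representing the nonzero class of `H₀(C)`. -/
def GenCycle (z : C.Chain) : Prop :=
  C.isCycle z ∧ C.isGraded z 0 ∧ ¬ C.isBoundary z

/-- The bifiltration level of a basis element. -/
def lev (x : C.B) : ℤ × ℤ := (C.alg x, C.alex x)

/-- A model knot complex: `∂ ∘ ∂ = 0`; `∂` drops the grading by one and does
not increase either filtration; the homology is one dimensional, concentrated
in grading 0; and the minimum over cycles representing the generator of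
`H₀(C)` of their maximal `alg` (resp. `alex`) filtration level is 0. -/
def IsModel : Prop :=
  (∀ x z, (∑ y, C.d x y * C.d y z) = 0) ∧
  (∀ x y, C.d x y ≠ 0 → C.gr y = C.gr x - 1 ∧ C.alg y ≤ C.alg x ∧ C.alex y ≤ C.alex x) ∧
  (∀ k : ℤ, k ≠ 0 → ∀ z : C.Chain, C.isCycle z → C.isGraded z k → C.isBoundary z) ∧
  (∃ z : C.Chain, C.GenCycle z) ∧
  (∀ z z' : C.Chain, C.GenCycle z → C.GenCycle z' → C.isBoundary (z + z')) ∧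
  (∃ z : C.Chain, C.GenCycle z ∧ ∀ x, z x ≠ 0 → C.alg x ≤ 0) ∧
  (∀ z : C.Chain, C.GenCycle z → ∃ x, z x ≠ 0 ∧ 0 ≤ C.alg x) ∧
  (∃ z : C.Chain, C.GenCycle z ∧ ∀ x, z x ≠ 0 → C.alex x ≤ 0) ∧
  (∀ z : C.Chain, C.GenCycle z → ∃ x, z x ≠ 0 ∧ 0 ≤ C.alex x)

/-- An acyclic complex: conditions (i) and (ii) hold but the homology vanishes. -/
def IsAcyclic : Prop :=
  (∀ x z, (∑ y, C.d x y * C.d y z) = 0) ∧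
  (∀ x y, C.d x y ≠ 0 → C.gr y = C.gr x - 1 ∧ C.alg y ≤ C.alg x ∧ C.alex y ≤ C.alex x) ∧
  (∀ z : C.Chain, C.isCycle z → C.isBoundary z)

end PreComplex

/-- `f_t(i,j) = (t/2)·j + (1 − t/2)·i`. -/
noncomputable def fval (t : ℝ) (p : ℤ × ℤ) : ℝ :=
  (t / 2) * (p.2 : ℝ) + (1 - t / 2) * (p.1 : ℝ)

namespace PreComplex

variable (C : PreComplex)

/-- A chain lies in the subcomplex `F_{t,s}`. -/
def inF (t s : ℝ) (c : C.Chain) : Prop :=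
  ∀ x, c x ≠ 0 → fval t (C.lev x) ≤ s

/-- `γ_C(t)`: the minimal `s` such that `H₀(F_{t,s}) → H₀(C)` is surjective,
i.e. such that `F_{t,s}` contains a cycle representing the generator. -/
noncomputable def gamma (t : ℝ) : ℝ :=
  sInf {s : ℝ | ∃ z : C.Chain, C.GenCycle z ∧ C.inF t s z}

/-- The Upsilon invariant `Υ_C(t) = −2 γ_C(t)`. -/
noncomputable def Upsilon (t : ℝ) : ℝ := -2 * C.gamma t

/-- `P`: the set of bifiltration levels of basis elements. -/
def PSet : Set (ℤ × ℤ) := Set.range C.lev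

/-- `P_u = { p ∈ P : f_u(p) = γ_C(u) }`. -/
def Pt (u : ℝ) : Set (ℤ × ℤ) := {p ∈ C.PSet | fval u p = C.gamma u}

/-- `p` is the negative pivot point of `C` at `t`. -/
def IsNegPivot (t : ℝ) (p : ℤ × ℤ) : Prop :=
  ∃ δ₀ > (0 : ℝ), ∀ δ : ℝ, 0 < δ → δ < δ₀ → C.Pt (t - δ) ∩ C.Pt t = {p}

/-- `p` is the positive pivot point of `C` at `t`. -/
def IsPosPivot (t : ℝ) (p : ℤ × ℤ) : Prop :=
  ∃ δ₀ > (0 : ℝ), ∀ δ : ℝ, 0 < δ → δ < δ₀ → C.Pt (t + δ) ∩ C.Pt t = {p}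

/-- Cycles in `F_{t−δ, γ_C(t−δ)}` representing the nonzero class of `H₀(C)`. -/
def ZminusAt (t δ : ℝ) : Set C.Chain :=
  {z | C.GenCycle z ∧ C.inF (t - δ) (C.gamma (t - δ)) z}

/-- Cycles in `F_{t+δ, γ_C(t+δ)}` representing the nonzero class of `H₀(C)`. -/
def ZplusAt (t δ : ℝ) : Set C.Chain :=
  {z | C.GenCycle z ∧ C.inF (t + δ) (C.gamma (t + δ)) z}

/-- `Z⁻`: the (eventual, for all sufficiently small `δ > 0`) set of cycles in
`F_{t−δ, γ_C(t−δ)}` representing the nonzero class of `H₀(C)`. -/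
def Zminus (t : ℝ) : Set C.Chain :=
  {z | ∃ δ₀ > (0 : ℝ), ∀ δ : ℝ, 0 < δ → δ < δ₀ → z ∈ C.ZminusAt t δ}

/-- `Z⁺`: the (eventual, for all sufficiently small `δ > 0`) set of cycles in
`F_{t+δ, γ_C(t+δ)}` representing the nonzero class of `H₀(C)`. -/
def Zplus (t : ℝ) : Set C.Chain :=
  {z | ∃ δ₀ > (0 : ℝ), ∀ δ : ℝ, 0 < δ → δ < δ₀ → z ∈ C.ZplusAt t δ}

/-- A basis element lies in the subcomplex `F_{t,γ_C(t)} + F_{s,r}`. -/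
def inRegion (t s r : ℝ) (x : C.B) : Prop :=
  fval t (C.lev x) ≤ C.gamma t ∨ fval s (C.lev x) ≤ r

/-- `z` and `z'` represent the same homology class in `H₀(F_{t,γ_C(t)} + F_{s,r})`
(over F₂ the difference `z − z'` is `z + z'`). -/
def sameClass (t s r : ℝ) (z z' : C.Chain) : Prop :=
  (∀ x, z x ≠ 0 → C.inRegion t s r x) ∧
  (∀ x, z' x ≠ 0 → C.inRegion t s r x) ∧
  ∃ w : C.Chain, (∀ x, w x ≠ 0 → C.inRegion t s r x) ∧ C.bdry w = z + z'

/-- The set of `r` for which some `z⁻ ∈ Z⁻` and `z⁺ ∈ Z⁺` represent the same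
class in `H₀(F_{t,γ_C(t)} + F_{s,r})`. -/
def gamma2Set (t s : ℝ) : Set ℝ :=
  {r | ∃ zm ∈ C.Zminus t, ∃ zp ∈ C.Zplus t, C.sameClass t s r zm zp}

/-- `γ²_{C,t}(s)`, as an extended real: the minimum of `gamma2Set`
(`−∞` if the condition holds for every `r`). -/
noncomputable def gamma2 (t s : ℝ) : EReal :=
  sInf ((fun r : ℝ => (r : EReal)) '' C.gamma2Set t s)

/-- `Υ²_{C,t}(s) = −2 (γ²_{C,t}(s) − γ_C(t))`. -/
noncomputable def Upsilon2 (t s : ℝ) : EReal :=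
  (-2 : EReal) * (C.gamma2 t s - (C.gamma t : EReal))

end PreComplex

/-- The jump of the derivative of `f` at `t`: the right-hand derivative minus
the left-hand derivative. -/
noncomputable def derivJump (f : ℝ → ℝ) (t : ℝ) : ℝ :=
  derivWithin f (Set.Ici t) t - derivWithin f (Set.Iic t) t

/-- Direct sum of two pre-complexes. -/
def PreComplex.dsum (C A : PreComplex) : PreComplex where
  B := C.B ⊕ A.B
  fB := inferInstance
  dB := inferInstance
  gr := Sum.elim C.gr A.gr
  alg := Sum.elim C.alg A.alg
  alex := Sum.elim C.alex A.alex
  d := fun x y =>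
    match x, y with
    | Sum.inl x, Sum.inl y => C.d x y
    | Sum.inr x, Sum.inr y => A.d x y
    | _, _ => 0

/-- Tensor product of two pre-complexes. -/
def PreComplex.tensor (C₁ C₂ : PreComplex) : PreComplex where
  B := C₁.B × C₂.B
  fB := inferInstance
  dB := inferInstance
  gr := fun x => C₁.gr x.1 + C₂.gr x.2
  alg := fun x => C₁.alg x.1 + C₂.alg x.2
  alex := fun x => C₁.alex x.1 + C₂.alex x.2
  d := fun x y =>
    (if x.2 = y.2 then C₁.d x.1 y.1 else 0) + (if x.1 = y.1 then C₂.d x.2 y.2 else 0)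

/-- An isomorphism of pre-complexes: a bijection of the distinguished bases
preserving `gr`, `alg`, `alex`, whose linear extension commutes with the
differentials. -/
def PreComplex.Iso (C₁ C₂ : PreComplex) : Prop :=
  ∃ e : C₁.B ≃ C₂.B,
    (∀ x, C₂.gr (e x) = C₁.gr x) ∧
    (∀ x, C₂.alg (e x) = C₁.alg x) ∧
    (∀ x, C₂.alex (e x) = C₁.alex x) ∧
    (∀ x y, C₂.d (e x) (e y) = C₁.d x y)

/-- Stable equivalence of pre-complexes: isomorphism after adding acyclic
summands. -/
def PreComplex.StablyEquiv (C₁ C₂ : PreComplex) : Prop :=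
  ∃ A₁ A₂ : PreComplex, A₁.IsAcyclic ∧ A₂.IsAcyclic ∧ (C₁.dsum A₁).Iso (C₂.dsum A₂)

namespace PreComplex

variable (C A : PreComplex)

lemma bdry_zero : C.bdry 0 = 0 := by
  funext y; simp [bdry]

lemma dsum_bdry_inl (Z : (C.dsum A).Chain) (y : C.B) :
    (C.dsum A).bdry Z (Sum.inl y) = C.bdry (fun x => Z (Sum.inl x)) y := by
  unfold bdry
  rw [show (∑ x : (C.dsum A).B, Z x * (C.dsum A).d x (Sum.inl y)) =
    ∑ x : C.B ⊕ A.B, Z x * (C.dsum A).d x (Sum.inl y) from rfl, Fintype.sum_sum_type]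
  simp [dsum]

lemma dsum_bdry_inr (Z : (C.dsum A).Chain) (y : A.B) :
    (C.dsum A).bdry Z (Sum.inr y) = A.bdry (fun x => Z (Sum.inr x)) y := by
  unfold bdry
  rw [show (∑ x : (C.dsum A).B, Z x * (C.dsum A).d x (Sum.inr y)) =
    ∑ x : C.B ⊕ A.B, Z x * (C.dsum A).d x (Sum.inr y) from rfl, Fintype.sum_sum_type]
  simp [dsum]

lemma genCycle_inl {z : C.Chain} (hz : C.GenCycle z) :
    (C.dsum A).GenCycle (Sum.elim z 0) := by
  obtain ⟨h1, h2, h3⟩ := hz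
  refine ⟨?_, ?_, ?_⟩
  · funext y
    cases y with
    | inl y =>
      refine (dsum_bdry_inl C A _ y).trans ?_
      have : (fun x => Sum.elim z (0 : A.Chain) (Sum.inl x)) = z := rfl
      rw [this, h1]; rfl
    | inr y =>
      refine (dsum_bdry_inr C A _ y).trans ?_
      have : (fun x => Sum.elim z (0 : A.Chain) (Sum.inr x)) = (0 : A.Chain) := rfl
      rw [this, bdry_zero]; rfl
  · rintro (a | b) hx
    · exact h2 a hx
    · simp at hx
  · rintro ⟨W, hW⟩
    apply h3
    refine ⟨fun x => W (Sum.inl x), ?_⟩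
    funext y
    rw [← dsum_bdry_inl, hW]; rfl

lemma genCycle_proj (hA : A.IsAcyclic) {Z : (C.dsum A).Chain}
    (hZ : (C.dsum A).GenCycle Z) : C.GenCycle (fun x => Z (Sum.inl x)) := by
  obtain ⟨h1, h2, h3⟩ := hZ
  refine ⟨?_, ?_, ?_⟩
  · funext y
    rw [← dsum_bdry_inl, h1]; rfl
  · intro x hx
    exact h2 (Sum.inl x) hx
  · rintro ⟨w, hw⟩
    apply h3
    have hcyc : A.isCycle (fun x => Z (Sum.inr x)) := by
      funext y
      rw [← dsum_bdry_inr, h1]; rfl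
    obtain ⟨wA, hwA⟩ := hA.2.2 _ hcyc
    refine ⟨Sum.elim w wA, ?_⟩
    funext y
    cases y with
    | inl y =>
      refine (dsum_bdry_inl C A _ y).trans ?_
      have : (fun x => Sum.elim w wA (Sum.inl x)) = w := rfl
      rw [this, hw]
    | inr y =>
      refine (dsum_bdry_inr C A _ y).trans ?_
      have : (fun x => Sum.elim w wA (Sum.inr x)) = wA := rfl
      rw [this, hwA]

lemma gamma_dsum (hA : A.IsAcyclic) (t : ℝ) :
    (C.dsum A).gamma t = C.gamma t := by
  unfold gamma
  congr 1
  ext s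
  constructor
  · rintro ⟨Z, hZ, hF⟩
    exact ⟨fun x => Z (Sum.inl x), genCycle_proj C A hA hZ,
      fun x hx => hF (Sum.inl x) hx⟩
  · rintro ⟨z, hz, hF⟩
    refine ⟨Sum.elim z 0, genCycle_inl C A hz, ?_⟩
    rintro (a | b) hx
    · exact hF a hx
    · simp at hx

lemma inRegion_inl (hA : A.IsAcyclic) (t s r : ℝ) (x : C.B) :
    (C.dsum A).inRegion t s r (Sum.inl x) ↔ C.inRegion t s r x := by
  unfold inRegion
  rw [gamma_dsum C A hA]
  have h : (C.dsum A).lev (Sum.inl x) = C.lev x := rfl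
  rw [h]

lemma gamma2Set_dsum (hA : A.IsAcyclic) (t s : ℝ) :
    (C.dsum A).gamma2Set t s = C.gamma2Set t s := by
  ext r
  constructor
  · rintro ⟨Zm, ⟨δ₀, hδ₀, hm⟩, Zp, ⟨δ₁, hδ₁, hp⟩, h1, h2, W, hW1, hW2⟩
    refine ⟨fun x => Zm (Sum.inl x), ⟨δ₀, hδ₀, ?_⟩,
      fun x => Zp (Sum.inl x), ⟨δ₁, hδ₁, ?_⟩, ?_, ?_, ⟨fun x => W (Sum.inl x), ?_, ?_⟩⟩
    · intro δ hδ1 hδ2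
      obtain ⟨hg, hf⟩ := hm δ hδ1 hδ2
      refine ⟨genCycle_proj C A hA hg, fun x hx => ?_⟩
      have := hf (Sum.inl x) hx
      rwa [gamma_dsum C A hA] at this
    · intro δ hδ1 hδ2
      obtain ⟨hg, hf⟩ := hp δ hδ1 hδ2
      refine ⟨genCycle_proj C A hA hg, fun x hx => ?_⟩
      have := hf (Sum.inl x) hx
      rwa [gamma_dsum C A hA] at this
    · exact fun x hx => (inRegion_inl C A hA t s r x).mp (h1 (Sum.inl x) hx)
    · exact fun x hx => (inRegion_inl C A hA t s r x).mp (h2 (Sum.inl x) hx)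
    · exact fun x hx => (inRegion_inl C A hA t s r x).mp (hW1 (Sum.inl x) hx)
    · funext y
      have := congrFun hW2 (Sum.inl y)
      rw [dsum_bdry_inl] at this
      exact this
  · rintro ⟨zm, ⟨δ₀, hδ₀, hm⟩, zp, ⟨δ₁, hδ₁, hp⟩, h1, h2, w, hw1, hw2⟩
    refine ⟨Sum.elim zm 0, ⟨δ₀, hδ₀, ?_⟩,
      Sum.elim zp 0, ⟨δ₁, hδ₁, ?_⟩, ?_, ?_, ⟨Sum.elim w 0, ?_, ?_⟩⟩
    · intro δ hδ1 hδ2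
      obtain ⟨hg, hf⟩ := hm δ hδ1 hδ2
      refine ⟨genCycle_inl C A hg, ?_⟩
      rintro (a | b) hx
      · rw [gamma_dsum C A hA]; exact hf a hx
      · simp at hx
    · intro δ hδ1 hδ2
      obtain ⟨hg, hf⟩ := hp δ hδ1 hδ2
      refine ⟨genCycle_inl C A hg, ?_⟩
      rintro (a | b) hx
      · rw [gamma_dsum C A hA]; exact hf a hx
      · simp at hx
    · rintro (a | b) hx
      · exact (inRegion_inl C A hA t s r a).mpr (h1 a hx)
      · simp at hx
    · rintro (a | b) hx
      · exact (inRegion_inl C A hA t s r a).mpr (h2 a hx)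
      · simp at hx
    · rintro (a | b) hx
      · exact (inRegion_inl C A hA t s r a).mpr (hw1 a hx)
      · simp at hx
    · funext y
      cases y with
      | inl y =>
        refine (dsum_bdry_inl C A _ y).trans ?_
        have h : (fun x => Sum.elim w (0 : A.Chain) (Sum.inl x)) = w := rfl
        rw [h, hw2]; rfl
      | inr y =>
        refine (dsum_bdry_inr C A _ y).trans ?_
        have h : (fun x => Sum.elim w (0 : A.Chain) (Sum.inr x)) = (0 : A.Chain) := rfl
        rw [h, bdry_zero]; rfl

lemma gamma2_dsum (hA : A.IsAcyclic) (t s : ℝ) :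
    (C.dsum A).gamma2 t s = C.gamma2 t s := by
  unfold gamma2
  rw [gamma2Set_dsum C A hA t s]

end PreComplex

/-- adding an acyclic summand `A` to a model knot complex `C`
changes neither `γ` and `Υ`, nor `γ²` and `Υ²`. -/
theorem acyclic_summand_invariance (C A : PreComplex)
    (hC : C.IsModel) (hA : A.IsAcyclic) :
    (∀ t ∈ Set.Icc (0 : ℝ) 2,
        (C.dsum A).gamma t = C.gamma t ∧ (C.dsum A).Upsilon t = C.Upsilon t) ∧
    (∀ t ∈ Set.Ioo (0 : ℝ) 2, ∀ s ∈ Set.Icc (0 : ℝ) 2,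
        (C.dsum A).gamma2 t s = C.gamma2 t s ∧
        (C.dsum A).Upsilon2 t s = C.Upsilon2 t s) := by
  refine ⟨fun t _ => ⟨PreComplex.gamma_dsum C A hA t, ?_⟩,
    fun t _ s _ => ⟨PreComplex.gamma2_dsum C A hA t s, ?_⟩⟩
  · unfold PreComplex.Upsilon
    rw [PreComplex.gamma_dsum C A hA t]
  · unfold PreComplex.Upsilon2
    rw [PreComplex.gamma2_dsum C A hA t s, PreComplex.gamma_dsum C A hA t]
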